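/- Let y : [0, ∞) → ℝ be a C² solution of the Laplace–Young equation C·y = A·y''/(1 + (y')²)^{3/2} with A, C > 0. If y is monotone and y' is monotone (so both have limits at infinity) and y is bounded, then y(x) → 0 as x → ∞. -/

import Mathlib

open Filter

/-- If the derivative of `f` is at least `ε` on `[x₀, ∞)`, then `f` grows linearly. -/
private lemma growth_aux {f : ℝ → ℝ} (hf : Differentiable ℝ f) {ε x₀ : ℝ}
    (h : ∀ x ∈ Set.Ici x₀, ε ≤ deriv f x) :
    ∀ x ∈ Set.Ici x₀, f x₀ + ε * (x - x₀) ≤ f x := by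
  intro x hx
  have hdiff : Differentiable ℝ (fun z => f z - ε * z) :=
    hf.sub (differentiable_id.const_mul ε)
  have hder : ∀ z, deriv (fun z => f z - ε * z) z = deriv f z - ε := by
    intro z
    have : HasDerivAt (fun z => f z - ε * z) (deriv f z - ε * 1) z :=
      (hf z).hasDerivAt.sub ((hasDerivAt_id z).const_mul ε)
    simpa using this.deriv
  have hmono : MonotoneOn (fun z => f z - ε * z) (Set.Ici x₀) := by
    apply monotoneOn_of_deriv_nonneg (convex_Ici x₀) hdiff.continuous.continuousOn
      hdiff.differentiableOn
    intro z hz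
    rw [interior_Ici] at hz
    rw [hder z]
    have := h z (Set.mem_Ici.mpr (le_of_lt hz))
    linarith
  have := hmono (Set.self_mem_Ici (a := x₀)) hx hx
  simp only at this
  linarith

/-- Any limit of a bounded solution of the Laplace–Young ODE is nonpositive. -/
private lemma limit_nonpos (A C : ℝ) (hA : 0 < A) (hC : 0 < C) (y : ℝ → ℝ)
    (hy : ContDiff ℝ 2 y)
    (hODE : ∀ x ∈ Set.Ici (0:ℝ),
      C * y x = A * deriv (deriv y) x / (1 + (deriv y x) ^ 2) ^ ((3:ℝ)/2))
    (M : ℝ) (hbdd : ∀ x ∈ Set.Ici (0:ℝ), |y x| ≤ M)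
    (L : ℝ) (hL : Tendsto y atTop (nhds L)) : L ≤ 0 := by
  by_contra hpos
  push_neg at hpos
  have hy1 : Differentiable ℝ y := hy.differentiable (by norm_num)
  have hy' : Differentiable ℝ (deriv y) := by
    have h2 : ContDiff ℝ (1 + 1) y := by norm_num at hy ⊢; exact hy
    exact ((contDiff_succ_iff_deriv.mp h2).2.2).differentiable one_ne_zero
  -- eventually y x ≥ L/2
  obtain ⟨a, ha⟩ := eventually_atTop.mp (hL.eventually (eventually_ge_nhds (by linarith : L/2 < L)))
  set x₀ : ℝ := max a 0 with hx₀def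
  have hx₀0 : (0:ℝ) ≤ x₀ := le_max_right a 0
  set ε : ℝ := C * (L / 2) / A with hεdef
  have hε : 0 < ε := by positivity
  -- the second derivative is at least ε on [x₀, ∞)
  have hdd : ∀ x ∈ Set.Ici x₀, ε ≤ deriv (deriv y) x := by
    intro x hx
    have hxa : a ≤ x := le_trans (le_max_left a 0) hx
    have hx0 : (0:ℝ) ≤ x := le_trans hx₀0 hx
    have hyx : L / 2 ≤ y x := ha x hxa
    have hODEx := hODE x hx0
    set D : ℝ := (1 + (deriv y x) ^ 2) ^ ((3:ℝ)/2) with hDdef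
    have hD1 : (1:ℝ) ≤ D := Real.one_le_rpow (by nlinarith [sq_nonneg (deriv y x)]) (by norm_num)
    have hD0 : (0:ℝ) < D := lt_of_lt_of_le one_pos hD1
    have hform : deriv (deriv y) x = C * y x * D / A := by
      field_simp at hODEx ⊢
      linarith
    rw [hform, hεdef, div_le_div_iff₀ hA hA]
    have hCy : C * (L/2) ≤ C * y x := by nlinarith
    have h0 : 0 ≤ C * y x := by nlinarith
    have hCy2 : C * y x ≤ C * y x * D := by
      nlinarith [mul_le_mul_of_nonneg_left hD1 h0]
    nlinarith [mul_le_mul_of_nonneg_right (hCy.trans hCy2) hA.le]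
  -- hence deriv y grows linearly
  have hgrow1 := growth_aux hy' hdd
  -- pick x₁ beyond which deriv y ≥ 1
  set x₁ : ℝ := max x₀ (x₀ + (1 - deriv y x₀) / ε) with hx₁def
  have hx₁0 : x₀ ≤ x₁ := le_max_left _ _
  have hd1 : ∀ x ∈ Set.Ici x₁, (1:ℝ) ≤ deriv y x := by
    intro x hx
    have hx0 : x₀ ≤ x := le_trans hx₁0 hx
    have h1 := hgrow1 x hx0
    have h2 : x₀ + (1 - deriv y x₀) / ε ≤ x := le_trans (le_max_right _ _) hx
    have h3 : (1 - deriv y x₀) / ε ≤ x - x₀ := by linarith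
    have h4 : 1 - deriv y x₀ ≤ ε * (x - x₀) := by
      rw [div_le_iff₀ hε] at h3; linarith [mul_comm ε (x - x₀)]
    linarith
  have hgrow2 := growth_aux hy1 hd1
  -- contradiction with boundedness
  set X : ℝ := max x₁ (x₁ + M + 1 - y x₁) with hXdef
  have hX1 : x₁ ≤ X := le_max_left _ _
  have hX0 : (0:ℝ) ≤ X := le_trans (le_trans hx₀0 hx₁0) hX1
  have h5 := hgrow2 X hX1
  have h6 : x₁ + M + 1 - y x₁ ≤ X := le_max_right _ _
  have h7 := abs_le.mp (hbdd X hX0)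
  have h8 : y x₁ + 1 * (X - x₁) ≥ M + 1 := by linarith
  linarith [h7.2]

/-- A bounded `C²` solution of the Laplace–Young equation on `[0,∞)` which is
monotone with monotone derivative tends to `0` at infinity. -/
theorem stmt9 (A C : ℝ) (hA : 0 < A) (hC : 0 < C) (y : ℝ → ℝ)
    (hy : ContDiff ℝ 2 y)
    (hODE : ∀ x ∈ Set.Ici (0:ℝ),
      C * y x = A * deriv (deriv y) x / (1 + (deriv y x) ^ 2) ^ ((3:ℝ)/2))
    (hmono : MonotoneOn y (Set.Ici 0) ∨ AntitoneOn y (Set.Ici 0))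
    (hmono' : MonotoneOn (deriv y) (Set.Ici 0) ∨ AntitoneOn (deriv y) (Set.Ici 0))
    (hbdd : ∃ M : ℝ, ∀ x ∈ Set.Ici (0:ℝ), |y x| ≤ M) :
    Tendsto y atTop (nhds 0) := by
  obtain ⟨M, hM⟩ := hbdd
  -- y tends to some limit L
  have hEq : ∀ᶠ x in atTop, y (max x 0) = y x := by
    filter_upwards [eventually_ge_atTop (0:ℝ)] with x hx
    rw [max_eq_left hx]
  have hlim : ∃ L : ℝ, Tendsto y atTop (nhds L) := by
    rcases hmono with hm | hm
    · have hmono2 : Monotone (fun x => y (max x 0)) := fun a b hab =>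
        hm (le_max_right a 0) (le_max_right b 0) (max_le_max hab le_rfl)
      have hbdd2 : BddAbove (Set.range fun x => y (max x 0)) := by
        refine ⟨M, ?_⟩
        rintro _ ⟨x, rfl⟩
        exact (abs_le.mp (hM (max x 0) (le_max_right x 0))).2
      exact ⟨_, (tendsto_atTop_ciSup hmono2 hbdd2).congr' hEq⟩
    · have hmono2 : Antitone (fun x => y (max x 0)) := fun a b hab =>
        hm (le_max_right a 0) (le_max_right b 0) (max_le_max hab le_rfl)
      have hbdd2 : BddBelow (Set.range fun x => y (max x 0)) := by
        refine ⟨-M, ?_⟩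
        rintro _ ⟨x, rfl⟩
        exact (abs_le.mp (hM (max x 0) (le_max_right x 0))).1
      exact ⟨_, (tendsto_atTop_ciInf hmono2 hbdd2).congr' hEq⟩
  obtain ⟨L, hL⟩ := hlim
  -- L ≤ 0 and -L ≤ 0
  have h1 : L ≤ 0 := limit_nonpos A C hA hC y hy hODE M hM L hL
  have h2 : -L ≤ 0 := by
    have hyneg : ContDiff ℝ 2 (fun x => -y x) := hy.neg
    have hd1 : deriv (fun x => -y x) = fun x => -deriv y x := funext fun x => deriv.neg
    have hODEneg : ∀ x ∈ Set.Ici (0:ℝ),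
        C * (-y x) = A * deriv (deriv (fun x => -y x)) x /
          (1 + (deriv (fun x => -y x) x) ^ 2) ^ ((3:ℝ)/2) := by
      intro x hx
      have := hODE x hx
      rw [hd1]
      have hdd : deriv (fun x => -deriv y x) x = -deriv (deriv y) x := deriv.neg
      rw [hdd]
      rw [show (-deriv y x) ^ 2 = (deriv y x) ^ 2 by ring]
      linear_combination -this
    have hMneg : ∀ x ∈ Set.Ici (0:ℝ), |(fun x => -y x) x| ≤ M := by
      intro x hx; simpa [abs_neg] using hM x hx
    exact limit_nonpos A C hA hC (fun x => -y x) hyneg hODEneg M hMneg (-L) hL.neg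
  have : L = 0 := le_antisymm h1 (by linarith)
  rwa [this] at hL
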